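/- Suppose d̃ ≤ d̂ and let u be a unit vector. Then dist (P̃ + R(C, d̂, P̃, u) • u) C = d̂. (The point at distance R(C, d̂, P̃, u) from P̃ in direction u lies exactly on the circle of radius d̂ centered at C; this is the achievability fact underlying the completeness theorem.) -/

import Mathlib

/-- The plane. -/
local notation "E" => EuclideanSpace ℝ (Fin 2)

/-- Directional uncertainty `R(C, d̂, P̃, u) = s + sqrt (d̂² − d̃² + s²)`,
where `d̃ = ‖C − P̃‖` and `s = ⟪C − P̃, u⟫_ℝ`. -/
noncomputable def dirUnc (C Pt : EuclideanSpace ℝ (Fin 2)) (dhat : ℝ)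
    (u : EuclideanSpace ℝ (Fin 2)) : ℝ :=
  (inner ℝ (C - Pt) u : ℝ) +
    Real.sqrt (dhat ^ 2 - ‖C - Pt‖ ^ 2 + (inner ℝ (C - Pt) u : ℝ) ^ 2)


/-- The point at distance `R(C, d̂, P̃, u)` from `P̃` in direction `u` lies
exactly on the circle of radius `d̂` centered at `C`. -/
theorem dirUnc_boundary (C Pt : E) (dhat : ℝ) (h : ‖C - Pt‖ ≤ dhat)
    (u : E) (hu : ‖u‖ = 1) :
    dist (Pt + dirUnc C Pt dhat u • u) C = dhat := by
  set s : ℝ := (inner ℝ (C - Pt) u : ℝ) with hs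
  have hdnn : (0:ℝ) ≤ dhat := le_trans (norm_nonneg _) h
  have harg : (0:ℝ) ≤ dhat ^ 2 - ‖C - Pt‖ ^ 2 + s ^ 2 := by
    have h2 : ‖C - Pt‖ ^ 2 ≤ dhat ^ 2 :=
      pow_le_pow_left₀ (norm_nonneg _) h 2
    nlinarith [sq_nonneg s]
  set t : ℝ := Real.sqrt (dhat ^ 2 - ‖C - Pt‖ ^ 2 + s ^ 2) with ht
  have ht2 : t ^ 2 = dhat ^ 2 - ‖C - Pt‖ ^ 2 + s ^ 2 := Real.sq_sqrt harg
  have hR : dirUnc C Pt dhat u = s + t := rfl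
  have key : dist (Pt + dirUnc C Pt dhat u • u) C ^ 2 = dhat ^ 2 := by
    rw [dist_eq_norm]
    have heq : Pt + dirUnc C Pt dhat u • u - C = (s + t) • u - (C - Pt) := by
      rw [hR]; abel
    rw [heq, norm_sub_sq_real, norm_smul, real_inner_smul_left,
      Real.norm_eq_abs, hu, mul_one, sq_abs]
    have hcomm : (inner ℝ u (C - Pt) : ℝ) = s := (real_inner_comm u (C - Pt)).symm
    rw [hcomm]
    nlinarith [ht2]
  have hdist : (0:ℝ) ≤ dist (Pt + dirUnc C Pt dhat u • u) C := dist_nonneg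
  nlinarith [key, hdist, hdnn]
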